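/- Assume C is 𝒜-approximating. An object V of H_𝒜 satisfies π_C V ≅ 0 if and only if V is isomorphic in H_𝒜 to a complex of the form [X → C ⊕ Y → Z] (concentrated in degrees −2, −1, 0) in which the component C → Z of the differential is a C-cover and X = Ker(C ⊕ Y → Z). Equivalently, the kernel of π_C : H_𝒜 → H_C consists of the objects Coker(τ≥0_𝒜 π_C V → V) for V ∈ H_𝒜. -/

import Mathlib

open CategoryTheory Limits

universe v u

variable {A : Type u} [Category.{v} A] [Abelian A]

/-- An object of `K(A)` is bounded above (i.e. lies in `K^-(A)`). -/
def BddAbv (X : HomotopyCategory A (ComplexShape.up ℤ)) : Prop :=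
  ∃ N : ℤ, ∀ i > N, IsZero (X.as.X i)

/-- All terms of the complex lie in the subcategory `𝒞`. -/
def TermsIn (𝒞 : Set A) (X : HomotopyCategory A (ComplexShape.up ℤ)) : Prop :=
  ∀ i : ℤ, X.as.X i ∈ 𝒞

/-- Objects of `T_C = K^-(C)` inside `K(A)`. -/
def InTC (𝒞 : Set A) (X : HomotopyCategory A (ComplexShape.up ℤ)) : Prop :=
  BddAbv X ∧ TermsIn 𝒞 X

/-- Objects of `T≤0_A`. -/
def InTleA (X : HomotopyCategory A (ComplexShape.up ℤ)) : Prop :=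
  BddAbv X ∧ ∀ i > 0, IsZero (X.as.X i)

/-- Objects of `T≤0_C`. -/
def InTleC (𝒞 : Set A) (X : HomotopyCategory A (ComplexShape.up ℤ)) : Prop :=
  InTleA X ∧ TermsIn 𝒞 X

/-- Quasi-isomorphisms in the homotopy category. -/
def IsQIso {X Y : HomotopyCategory A (ComplexShape.up ℤ)} (f : X ⟶ Y) : Prop :=
  ∀ i : ℤ, IsIso ((HomotopyCategory.homologyFunctor A (ComplexShape.up ℤ) i).map f)

/-- `f : Xc ⟶ X` is a `C`-approximation. -/
def IsCApprox (𝒞 : Set A) {Xc X : HomotopyCategory A (ComplexShape.up ℤ)} (f : Xc ⟶ X) : Prop :=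
  InTC 𝒞 Xc ∧ IsQIso f ∧
    ∀ V, InTC 𝒞 V → Function.Bijective (fun g : V ⟶ Xc => g ≫ f)

/-- `C` is `A`-approximating. -/
def CApproximating (𝒞 : Set A) : Prop :=
  ∀ X, BddAbv X → ∃ (Xc : HomotopyCategory A (ComplexShape.up ℤ)) (f : Xc ⟶ X), IsCApprox 𝒞 f

/-- Objects of `T≥0_A = (T≤0_A⟦1⟧)^⊥` in `T_A`. -/
def InTgeA (X : HomotopyCategory A (ComplexShape.up ℤ)) : Prop :=
  BddAbv X ∧ ∀ Y, InTleA Y → ∀ f : Y⟦(1:ℤ)⟧ ⟶ X, f = 0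

/-- Objects of `T≥0_C = (T≤0_C⟦1⟧)^⊥` in `T_C`. -/
def InTgeC (𝒞 : Set A) (X : HomotopyCategory A (ComplexShape.up ℤ)) : Prop :=
  InTC 𝒞 X ∧ ∀ Y, InTleC 𝒞 Y → ∀ f : Y⟦(1:ℤ)⟧ ⟶ X, f = 0

/-- The heart `H_A` of the t-structure on `T_A`. -/
def InHA (X : HomotopyCategory A (ComplexShape.up ℤ)) : Prop :=
  InTleA X ∧ InTgeA X

/-- The heart `H_C` of the t-structure on `T_C`. -/
def InHC (𝒞 : Set A) (X : HomotopyCategory A (ComplexShape.up ℤ)) : Prop :=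
  InTleC 𝒞 X ∧ InTgeC 𝒞 X

/-- `C`-covers. -/
def IsCCover (𝒞 : Set A) {C₀ M : A} (p : C₀ ⟶ M) : Prop :=
  C₀ ∈ 𝒞 ∧ Epi p ∧ ∀ V ∈ 𝒞, ∀ g : V ⟶ M, ∃ h : V ⟶ C₀, h ≫ p = g

/-- A `C`-resolution `⋯ → C¹ → C⁰ → M → 0` of `M`. -/
structure CResolution (𝒞 : Set A) (M : A) where
  obj : ℕ → A
  mem : ∀ n, obj n ∈ 𝒞
  d : ∀ n, obj (n + 1) ⟶ obj n
  ε : obj 0 ⟶ M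
  epi : Epi ε
  w0 : d 0 ≫ ε = 0
  w : ∀ n, d (n + 1) ≫ d n = 0
  exact0 : (ShortComplex.mk (d 0) ε w0).Exact
  exact : ∀ n, (ShortComplex.mk (d (n + 1)) (d n) (w n)).Exact
  homSurj : ∀ V ∈ 𝒞, ∀ g : V ⟶ M, ∃ h : V ⟶ obj 0, h ≫ ε = g
  homExact0 : ∀ V ∈ 𝒞, ∀ g : V ⟶ obj 0, g ≫ ε = 0 → ∃ h : V ⟶ obj 1, h ≫ d 0 = g
  homExact : ∀ n, ∀ V ∈ 𝒞, ∀ g : V ⟶ obj (n + 1),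
    g ≫ d n = 0 → ∃ h : V ⟶ obj (n + 2), h ≫ d (n + 1) = g

/-- `𝒜` has `C`-dimension at most `n`. -/
def CDimLE (𝒞 : Set A) (n : ℕ) : Prop :=
  ∀ M : A, ∃ r : CResolution 𝒞 M, ∀ m > n, IsZero (r.obj m)

/-- `𝒞` is a Karoubi-closed full additive subcategory. -/
structure IsAddKaroubi (𝒞 : Set A) : Prop where
  zero : ∀ Z : A, IsZero Z → Z ∈ 𝒞
  iso : ∀ {X Y : A}, (X ≅ Y) → X ∈ 𝒞 → Y ∈ 𝒞
  biprod : ∀ {X Y : A}, X ∈ 𝒞 → Y ∈ 𝒞 → (X ⊞ Y) ∈ 𝒞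
  summand : ∀ {X Y : A}, X ∈ 𝒞 → ∀ (i : Y ⟶ X) (p : X ⟶ Y), i ≫ p = 𝟙 Y → Y ∈ 𝒞

/-- The object `P_M ∈ H_C` : the complex `M` concentrated in degree `0`. -/
noncomputable def PObj (M : A) : HomotopyCategory A (ComplexShape.up ℤ) :=
  (HomotopyCategory.quotient A (ComplexShape.up ℤ)).obj
    ((HomologicalComplex.single A (ComplexShape.up ℤ) 0).obj M)

/-- The morphism `P_f : P_M ⟶ P_N` induced by `f : M ⟶ N`. -/
noncomputable def PMap {M N : A} (f : M ⟶ N) : PObj M ⟶ PObj N :=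
  (HomotopyCategory.quotient A (ComplexShape.up ℤ)).map
    ((HomologicalComplex.single A (ComplexShape.up ℤ) 0).map f)

section Relative

variable (P : HomotopyCategory A (ComplexShape.up ℤ) → Prop)

/-- Epimorphism relative to the full subcategory `P`. -/
def EpiIn {X Y : HomotopyCategory A (ComplexShape.up ℤ)} (f : X ⟶ Y) : Prop :=
  ∀ Z, P Z → ∀ u v : Y ⟶ Z, f ≫ u = f ≫ v → u = v

/-- Monomorphism relative to the full subcategory `P`. -/
def MonoIn {X Y : HomotopyCategory A (ComplexShape.up ℤ)} (f : X ⟶ Y) : Prop :=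
  ∀ Z, P Z → ∀ u v : Z ⟶ X, u ≫ f = v ≫ f → u = v

/-- Simple object of the full (abelian) subcategory `P`: it is nonzero and every nonzero
morphism into it from an object of `P` is an epimorphism in `P`. -/
def SimpleIn (V : HomotopyCategory A (ComplexShape.up ℤ)) : Prop :=
  P V ∧ ¬ IsZero V ∧ ∀ U, P U → ∀ f : U ⟶ V, f ≠ 0 → EpiIn P f

/-- Projective object of the full subcategory `P`. -/
def ProjectiveIn (Q : HomotopyCategory A (ComplexShape.up ℤ)) : Prop :=
  P Q ∧ ∀ X Y, P X → P Y → ∀ e : X ⟶ Y, EpiIn P e → ∀ g : Q ⟶ Y, ∃ h : Q ⟶ X, h ≫ e = g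

/-- Injective object of the full subcategory `P`. -/
def InjectiveIn (J : HomotopyCategory A (ComplexShape.up ℤ)) : Prop :=
  P J ∧ ∀ X Y, P X → P Y → ∀ m : X ⟶ Y, MonoIn P m → ∀ g : X ⟶ J, ∃ h : Y ⟶ J, m ≫ h = g

/-- `f` is a kernel of `g` relative to the full subcategory `P`. -/
def IsKernelIn {X Y Z : HomotopyCategory A (ComplexShape.up ℤ)} (f : X ⟶ Y) (g : Y ⟶ Z) : Prop :=
  P X ∧ f ≫ g = 0 ∧ ∀ W, P W → ∀ h : W ⟶ Y, h ≫ g = 0 → ∃! l : W ⟶ X, l ≫ f = h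

/-- The sequence `X ⟶ Y ⟶ Z` is exact at `Y` relative to the abelian full subcategory `P`:
the induced map to any kernel of `g` in `P` is an epimorphism in `P`. -/
def ExactIn {X Y Z : HomotopyCategory A (ComplexShape.up ℤ)} (f : X ⟶ Y) (g : Y ⟶ Z) : Prop :=
  f ≫ g = 0 ∧ ∀ (K : HomotopyCategory A (ComplexShape.up ℤ)) (k : K ⟶ Y),
    IsKernelIn P k g → ∀ l : X ⟶ K, l ≫ k = f → EpiIn P l

/-- Short exact sequence `0 ⟶ X ⟶ Y ⟶ Z ⟶ 0` relative to `P`. -/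
def ShortExactIn {X Y Z : HomotopyCategory A (ComplexShape.up ℤ)} (f : X ⟶ Y) (g : Y ⟶ Z) : Prop :=
  MonoIn P f ∧ EpiIn P g ∧ IsKernelIn P f g

end Relative


open ZeroObject

section Trip
variable (X₂ X₁ X₀ : A) (d₂ : X₂ ⟶ X₁) (d₁ : X₁ ⟶ X₀)

noncomputable def tripX : ℤ → A := fun i => if i = 0 then X₀ else if i = -1 then X₁ else if i = -2 then X₂ else 0

noncomputable def tripD (i j : ℤ) : tripX X₂ X₁ X₀ i ⟶ tripX X₂ X₁ X₀ j :=
    if h : i = -2 ∧ j = -1 then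
      eqToHom (show tripX X₂ X₁ X₀ i = tripX X₂ X₁ X₀ (-2) by rw [h.1]) ≫
        (show tripX X₂ X₁ X₀ (-2) ⟶ tripX X₂ X₁ X₀ (-1) from d₂) ≫
        eqToHom (show tripX X₂ X₁ X₀ (-1) = tripX X₂ X₁ X₀ j by rw [h.2])
    else if h : i = -1 ∧ j = 0 then
      eqToHom (show tripX X₂ X₁ X₀ i = tripX X₂ X₁ X₀ (-1) by rw [h.1]) ≫
        (show tripX X₂ X₁ X₀ (-1) ⟶ tripX X₂ X₁ X₀ 0 from d₁) ≫
        eqToHom (show tripX X₂ X₁ X₀ 0 = tripX X₂ X₁ X₀ j by rw [h.2])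
    else 0

lemma tripD_zero (i j : ℤ) (h : ¬ (i = -2 ∧ j = -1)) (h' : ¬ (i = -1 ∧ j = 0)) :
    tripD X₂ X₁ X₀ d₂ d₁ i j = 0 := by
  unfold tripD; rw [dif_neg h, dif_neg h']

lemma tripD_21 : tripD X₂ X₁ X₀ d₂ d₁ (-2) (-1) = d₂ := by
  unfold tripD; rw [dif_pos ⟨rfl, rfl⟩]; simp; exact Category.comp_id _

lemma tripD_10 : tripD X₂ X₁ X₀ d₂ d₁ (-1) 0 = d₁ := by
  unfold tripD; rw [dif_neg (by omega), dif_pos ⟨rfl, rfl⟩]; simp; exact Category.comp_id _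

variable (w : d₂ ≫ d₁ = 0)

noncomputable def trip (w : d₂ ≫ d₁ = 0) : CochainComplex A ℤ where
  X := tripX X₂ X₁ X₀
  d := tripD X₂ X₁ X₀ d₂ d₁
  shape i j hij := by
    simp only [ComplexShape.up_Rel] at hij
    apply tripD_zero <;> omega
  d_comp_d' i j k hij hjk := by
    simp only [ComplexShape.up_Rel] at hij hjk
    by_cases h : i = -2
    · subst h
      obtain rfl : j = -1 := by omega
      obtain rfl : k = 0 := by omega
      rw [tripD_21, tripD_10]
      exact w
    · by_cases h' : i = -1
      · subst h'
        obtain rfl : j = 0 := by omega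
        rw [tripD_zero X₂ X₁ X₀ d₂ d₁ 0 k (by omega) (by omega), comp_zero]
      · rw [tripD_zero X₂ X₁ X₀ d₂ d₁ i j (by omega) (by omega), zero_comp]

@[simp] lemma trip_X0 : (trip X₂ X₁ X₀ d₂ d₁ w).X 0 = X₀ := rfl
@[simp] lemma trip_X1 : (trip X₂ X₁ X₀ d₂ d₁ w).X (-1) = X₁ := rfl
@[simp] lemma trip_X2 : (trip X₂ X₁ X₀ d₂ d₁ w).X (-2) = X₂ := rfl
@[simp] lemma trip_d21 : (trip X₂ X₁ X₀ d₂ d₁ w).d (-2) (-1) = d₂ := tripD_21 X₂ X₁ X₀ d₂ d₁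
@[simp] lemma trip_d10 : (trip X₂ X₁ X₀ d₂ d₁ w).d (-1) 0 = d₁ := tripD_10 X₂ X₁ X₀ d₂ d₁

lemma trip_isZero (i : ℤ) (hi : i < -2 ∨ 0 < i) : IsZero ((trip X₂ X₁ X₀ d₂ d₁ w).X i) := by
  show IsZero (tripX X₂ X₁ X₀ i)
  unfold tripX
  rw [if_neg (by omega), if_neg (by omega), if_neg (by omega)]
  exact isZero_zero A

end Trip

section CovHom
variable (U W : CochainComplex A ℤ) (s0 : U.X 0 ⟶ W.X (-1)) (s1 : U.X (-1) ⟶ W.X (-2))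

noncomputable def covHom : ∀ i j : ℤ, U.X i ⟶ W.X j := fun i j =>
  if h : i = 0 ∧ j = -1 then
    eqToHom (show U.X i = U.X 0 by rw [h.1]) ≫ s0 ≫ eqToHom (show W.X (-1) = W.X j by rw [h.2])
  else if h : i = -1 ∧ j = -2 then
    eqToHom (show U.X i = U.X (-1) by rw [h.1]) ≫ s1 ≫ eqToHom (show W.X (-2) = W.X j by rw [h.2])
  else 0

lemma covHom_01 : covHom U W s0 s1 0 (-1) = s0 := by
  unfold covHom; rw [dif_pos ⟨rfl, rfl⟩]; simp

lemma covHom_12 : covHom U W s0 s1 (-1) (-2) = s1 := by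
  unfold covHom; rw [dif_neg (by omega), dif_pos ⟨rfl, rfl⟩]; simp

lemma covHom_zero (i j : ℤ) (h : ¬ (i = 0 ∧ j = -1)) (h' : ¬ (i = -1 ∧ j = -2)) :
    covHom U W s0 s1 i j = 0 := by
  unfold covHom; rw [dif_neg h, dif_neg h']

end CovHom

/-- Any chain map from a complex with `X 0 ∈ 𝒞` to a `W`-shaped complex is null-homotopic. -/
lemma homotopy_to_cover_complex (𝒞 : Set A) (W : CochainComplex A ℤ)
    (hz : ∀ i : ℤ, (i < -2 ∨ 0 < i) → IsZero (W.X i))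
    (C Y : A) (e : W.X (-1) ≅ C ⊞ Y)
    (hcov : IsCCover 𝒞 (biprod.inl ≫ e.inv ≫ W.d (-1) 0))
    (hK : IsLimit (KernelFork.ofι (W.d (-2) (-1)) (W.d_comp_d (-2) (-1) 0)))
    (U : CochainComplex A ℤ) (hU : U.X 0 ∈ 𝒞) (u : U ⟶ W) :
    Nonempty (Homotopy u 0) := by
  obtain ⟨h0, hh0⟩ := hcov.2.2 (U.X 0) hU (u.f 0)
  set s0 : U.X 0 ⟶ W.X (-1) := h0 ≫ biprod.inl ≫ e.inv with hs0def
  have hs0 : s0 ≫ W.d (-1) 0 = u.f 0 := by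
    rw [hs0def]; simpa using hh0
  have hy : (u.f (-1) - U.d (-1) 0 ≫ s0) ≫ W.d (-1) 0 = 0 := by
    rw [Preadditive.sub_comp, Category.assoc, hs0, u.comm (-1) 0, sub_self]
  obtain ⟨s1, hs1⟩ := KernelFork.IsLimit.lift' hK _ hy
  simp only [Fork.ι_ofι] at hs1
  refine ⟨⟨covHom U W s0 s1, fun i j hij => covHom_zero U W s0 s1 i j (by simp only [ComplexShape.up_Rel] at hij; omega) (by simp only [ComplexShape.up_Rel] at hij; omega), fun i => ?_⟩⟩
  rcases lt_trichotomy i (-2) with hi | hi | hi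
  · exact (hz i (Or.inl hi)).eq_of_tgt _ _
  · subst hi
    rw [dNext_eq _ (show (ComplexShape.up ℤ).Rel (-2) (-1) by decide),
      prevD_eq _ (show (ComplexShape.up ℤ).Rel (-3) (-2) by decide)]
    rw [covHom_12, covHom_zero U W s0 s1 (-2) (-3) (by omega) (by omega)]
    simp only [zero_comp, add_zero, HomologicalComplex.zero_f]
    apply Fork.IsLimit.hom_ext hK
    simp only [Fork.ι_ofι, add_zero, Category.assoc]
    rw [hs1, u.comm (-2) (-1), Preadditive.comp_sub, ← Category.assoc, U.d_comp_d, zero_comp,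
      sub_zero]
  · rcases lt_trichotomy i 0 with hi' | hi' | hi'
    · obtain rfl : i = -1 := by omega
      rw [dNext_eq _ (show (ComplexShape.up ℤ).Rel (-1) 0 by decide),
        prevD_eq _ (show (ComplexShape.up ℤ).Rel (-2) (-1) by decide)]
      rw [covHom_01, covHom_12, hs1, HomologicalComplex.zero_f]
      abel
    · subst hi'
      rw [dNext_eq _ (show (ComplexShape.up ℤ).Rel 0 1 by decide),
        prevD_eq _ (show (ComplexShape.up ℤ).Rel (-1) 0 by decide)]
      rw [covHom_01, covHom_zero U W s0 s1 1 0 (by omega) (by omega), hs0,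
        HomologicalComplex.zero_f]
      simp
    · exact (hz i (Or.inr hi')).eq_of_tgt _ _

lemma inTC_single (𝒞 : Set A) (h𝒞 : IsAddKaroubi 𝒞) (M : A) (hM : M ∈ 𝒞) :
    InTC 𝒞 ((HomotopyCategory.quotient A (ComplexShape.up ℤ)).obj
      ((HomologicalComplex.single A (ComplexShape.up ℤ) 0).obj M)) := by
  constructor
  · exact ⟨0, fun i hi => HomologicalComplex.isZero_single_obj_X _ 0 M i (by omega)⟩
  · intro i
    by_cases hi : i = 0
    · subst hi
      exact h𝒞.iso (HomologicalComplex.singleObjXSelf (ComplexShape.up ℤ) 0 M).symm hM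
    · exact h𝒞.zero _ (HomologicalComplex.isZero_single_obj_X _ 0 M i hi)

lemma exists_cCover (𝒞 : Set A) (h𝒞 : IsAddKaroubi 𝒞) (happrox : CApproximating 𝒞) (Z : A) :
    ∃ (C : A) (p : C ⟶ Z), IsCCover 𝒞 p := by
  obtain ⟨Xc, f, hXc, hq, hbij⟩ := happrox (PObj Z)
    ⟨0, fun i hi => HomologicalComplex.isZero_single_obj_X _ 0 Z i (by omega)⟩
  set S := (HomologicalComplex.single A (ComplexShape.up ℤ) 0).obj Z with hS
  obtain ⟨u, rfl⟩ := (HomotopyCategory.quotient A (ComplexShape.up ℤ)).map_surjective f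
  have hiso : IsIso (HomologicalComplex.homologyMap u 0) := by
    have h1 : IsIso (((HomotopyCategory.quotient A (ComplexShape.up ℤ)) ⋙
        HomotopyCategory.homologyFunctor A (ComplexShape.up ℤ) 0).map u) := hq 0
    exact (NatIso.isIso_map_iff (HomotopyCategory.homologyFunctorFactors A (ComplexShape.up ℤ) 0) u).1 h1
  have hd : S.d 0 1 = 0 := HomologicalComplex.single_obj_d _ _ _ _ _
  have hd' : S.d (-1) 0 = 0 := HomologicalComplex.single_obj_d _ _ _ _ _
  have i1 : IsIso (S.iCycles 0) := S.isIso_iCycles 0 1 (by simp) hd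
  have i2 : IsIso (S.homologyπ 0) := S.isIso_homologyπ (-1) 0 (by simp) hd'
  have e1 : Epi (HomologicalComplex.cyclesMap u 0 ≫ S.homologyπ 0) := by
    rw [← HomologicalComplex.homologyπ_naturality]
    exact epi_comp _ _
  have e2 : Epi (HomologicalComplex.cyclesMap u 0) := by
    have h3 : Epi ((HomologicalComplex.cyclesMap u 0 ≫ S.homologyπ 0) ≫ inv (S.homologyπ 0)) :=
      epi_comp _ _
    simpa using h3
  have e3 : Epi (Xc.as.iCycles 0 ≫ u.f 0) := by
    rw [← HomologicalComplex.cyclesMap_i]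
    exact epi_comp _ _
  have e4 : Epi (u.f 0) := epi_of_epi (Xc.as.iCycles 0) _
  refine ⟨Xc.as.X 0, u.f 0 ≫ (HomologicalComplex.singleObjXSelf (ComplexShape.up ℤ) 0 Z).hom,
    hXc.2 0, epi_comp _ _, ?_⟩
  intro V' hV' g
  set m := (HomologicalComplex.single A (ComplexShape.up ℤ) 0).map g with hm
  obtain ⟨χ, hχ⟩ := (hbij _ (inTC_single 𝒞 h𝒞 V' hV')).2
    ((HomotopyCategory.quotient A (ComplexShape.up ℤ)).map m)
  obtain ⟨w, rfl⟩ := (HomotopyCategory.quotient A (ComplexShape.up ℤ)).map_surjective χ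
  have heq : (HomotopyCategory.quotient A (ComplexShape.up ℤ)).map (w ≫ u) =
      (HomotopyCategory.quotient A (ComplexShape.up ℤ)).map m := by
    rw [Functor.map_comp]; exact hχ
  have H := HomotopyCategory.homotopyOfEq _ _ heq
  have h00 := H.comm 0
  rw [dNext_eq _ (show (ComplexShape.up ℤ).Rel 0 1 by decide),
    prevD_eq _ (show (ComplexShape.up ℤ).Rel (-1) 0 by decide),
    HomologicalComplex.single_obj_d, zero_comp, hd', comp_zero,
    HomologicalComplex.comp_f, add_zero, zero_add] at h00
  refine ⟨(HomologicalComplex.singleObjXSelf (ComplexShape.up ℤ) 0 V').inv ≫ w.f 0, ?_⟩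
  rw [Category.assoc, ← Category.assoc (w.f 0), h00, hm,
    HomologicalComplex.single_map_f_self]
  simp

section KT
variable (V : CochainComplex A ℤ)

noncomputable def KTX : ℤ → A := fun i =>
  if i ≤ -2 then V.X i else if i = -1 then kernel (V.d (-1) 0) else 0

lemma KTX_eq {i : ℤ} (hi : i ≤ -2) : KTX V i = V.X i := if_pos hi

lemma KTX_isZero {i : ℤ} (hi : -1 < i) : IsZero (KTX V i) := by
  unfold KTX
  rw [if_neg (by omega), if_neg (by omega)]
  exact isZero_zero A

noncomputable def KTdbar : V.X (-2) ⟶ kernel (V.d (-1) 0) :=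
  kernel.lift _ (V.d (-2) (-1)) (V.d_comp_d _ _ _)

noncomputable def KTD : ∀ i j : ℤ, KTX V i ⟶ KTX V j := fun i j =>
  if h : j = i + 1 ∧ i ≤ -3 then
    eqToHom (KTX_eq V (by omega)) ≫ V.d i j ≫ eqToHom (KTX_eq V (show j ≤ -2 by omega)).symm
  else if h : j = i + 1 ∧ i = -2 then
    eqToHom (show KTX V i = KTX V (-2) by rw [h.2]) ≫
      (show KTX V (-2) ⟶ KTX V (-1) from KTdbar V) ≫
      eqToHom (show KTX V (-1) = KTX V j by rw [h.1, h.2]; rfl)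
  else 0

lemma KTD_le {i j : ℤ} (hij : j = i + 1) (hi : i ≤ -3) :
    KTD V i j = eqToHom (KTX_eq V (by omega)) ≫ V.d i j ≫
      eqToHom (KTX_eq V (show j ≤ -2 by omega)).symm := by
  unfold KTD; rw [dif_pos ⟨hij, hi⟩]

lemma KTD_21 : KTD V (-2) (-1) = KTdbar V := by
  unfold KTD; rw [dif_neg (by omega), dif_pos ⟨rfl, rfl⟩]; simp; exact Category.comp_id _

lemma KTD_zero (i j : ℤ) (h1 : ¬ (j = i + 1 ∧ i ≤ -3)) (h2 : ¬ (j = i + 1 ∧ i = -2)) :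
    KTD V i j = 0 := by
  unfold KTD; rw [dif_neg h1, dif_neg h2]

lemma KTdbar_ι : KTdbar V ≫ kernel.ι (V.d (-1) 0) = V.d (-2) (-1) := kernel.lift_ι _ _ _

noncomputable def KT : CochainComplex A ℤ where
  X := KTX V
  d := KTD V
  shape i j hij := by
    simp only [ComplexShape.up_Rel] at hij
    apply KTD_zero <;> omega
  d_comp_d' i j k hij hjk := by
    simp only [ComplexShape.up_Rel] at hij hjk
    rcases lt_trichotomy i (-3) with hi | hi | hi
    · rw [KTD_le V (by omega) (by omega), KTD_le V (by omega) (by omega)]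
      simp
    · subst hi
      obtain rfl : j = -2 := by omega
      obtain rfl : k = -1 := by omega
      rw [KTD_le V (by omega) (by omega), KTD_21]
      have hx : V.d (-3) (-2) ≫ KTdbar V = 0 := by
        rw [← cancel_mono (kernel.ι (V.d (-1) 0)), Category.assoc, KTdbar_ι, V.d_comp_d, zero_comp]
      exact (show (𝟙 _ ≫ V.d (-3) (-2) ≫ 𝟙 _) ≫ KTdbar V = 0 by simpa using hx)
    · by_cases h : i = -2
      · subst h
        obtain rfl : j = -1 := by omega
        rw [KTD_zero V (-1) k (by omega) (by omega), comp_zero]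
      · rw [KTD_zero V i j (by omega) (by omega), zero_comp]

noncomputable def KJf : ∀ i : ℤ, KTX V i ⟶ V.X i := fun i =>
  if hi : i ≤ -2 then eqToHom (KTX_eq V hi)
  else if hi' : i = -1 then
    eqToHom (show KTX V i = KTX V (-1) by rw [hi']) ≫
      (show KTX V (-1) ⟶ V.X (-1) from kernel.ι (V.d (-1) 0)) ≫
      eqToHom (show V.X (-1) = V.X i by rw [hi'])
  else 0

lemma KJf_le {i : ℤ} (hi : i ≤ -2) : KJf V i = eqToHom (KTX_eq V hi) := dif_pos hi

lemma KJf_m1 : KJf V (-1) = (show KTX V (-1) ⟶ V.X (-1) from kernel.ι (V.d (-1) 0)) := by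
  unfold KJf; rw [dif_neg (by omega), dif_pos rfl]; simp; exact Category.comp_id _

lemma KJf_pos {i : ℤ} (hi : -1 < i) : KJf V i = 0 := by
  unfold KJf; rw [dif_neg (by omega), dif_neg (by omega)]

/-- The canonical chain map `KT V ⟶ V`. -/
noncomputable def KJ : KT V ⟶ V where
  f := KJf V
  comm' i j hij := by
    simp only [ComplexShape.up_Rel] at hij
    show KJf V i ≫ _ = KTD V i j ≫ KJf V j
    rcases lt_trichotomy i (-3) with hi | hi | hi
    · rw [KJf_le V (by omega : i ≤ -2), KJf_le V (by omega : j ≤ -2),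
        KTD_le V (by omega) (by omega)]
      simp
    · subst hi
      obtain rfl : j = -2 := by omega
      rw [KJf_le V (by omega : (-3 : ℤ) ≤ -2), KJf_le V (by omega : (-2 : ℤ) ≤ -2),
        KTD_le V (by omega) (by omega)]
      simp
    · by_cases h : i = -2
      · subst h
        obtain rfl : j = -1 := by omega
        rw [KJf_le V (by omega : (-2 : ℤ) ≤ -2), KJf_m1, KTD_21]
        simp only [eqToHom_refl, Category.id_comp]
        exact (Category.id_comp _).trans (KTdbar_ι V).symm
      · by_cases h' : i = -1
        · subst h'
          obtain rfl : j = 0 := by omega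
          rw [KJf_m1, KJf_pos V (by omega), KTD_zero V (-1) 0 (by omega) (by omega),
            zero_comp]
          exact kernel.condition _
        · rw [KJf_pos V (by omega), KTD_zero V i j (by omega) (by omega), zero_comp, zero_comp]

end KT

lemma KT_d (V : CochainComplex A ℤ) : (KT V).d = KTD V := rfl
lemma KJ_f (V : CochainComplex A ℤ) : (KJ V).f = KJf V := rfl

lemma KJf_m2 (V : CochainComplex A ℤ) : KJf V (-2) = 𝟙 (V.X (-2)) := rfl

section Build
variable (V : CochainComplex A ℤ) (C : A) (p : C ⟶ V.X 0) (s : C ⟶ V.X (-1))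

noncomputable def bD : C ⊞ V.X (-1) ⟶ V.X 0 := biprod.desc p (V.d (-1) 0)

noncomputable def bW : CochainComplex A ℤ :=
  trip (kernel (bD V C p)) (C ⊞ V.X (-1)) (V.X 0) (kernel.ι _) (bD V C p) (kernel.condition _)

lemma bW_X : (bW V C p).X = tripX (kernel (bD V C p)) (C ⊞ V.X (-1)) (V.X 0) := rfl
lemma bW_d : (bW V C p).d = tripD (kernel (bD V C p)) (C ⊞ V.X (-1)) (V.X 0)
    (kernel.ι _) (bD V C p) := rfl

noncomputable def bf2 : V.X (-2) ⟶ kernel (bD V C p) :=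
  kernel.lift _ (V.d (-2) (-1) ≫ biprod.inr) (by simp [bD])

noncomputable def bfF : ∀ i : ℤ, V.X i ⟶ (bW V C p).X i := fun i =>
  if h : i = 0 then
    eqToHom (show V.X i = V.X 0 by rw [h]) ≫ (show V.X 0 ⟶ (bW V C p).X 0 from 𝟙 _) ≫
      eqToHom (show (bW V C p).X 0 = (bW V C p).X i by rw [h])
  else if h : i = -1 then
    eqToHom (show V.X i = V.X (-1) by rw [h]) ≫
      (show V.X (-1) ⟶ (bW V C p).X (-1) from biprod.inr) ≫
      eqToHom (show (bW V C p).X (-1) = (bW V C p).X i by rw [h])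
  else if h : i = -2 then
    eqToHom (show V.X i = V.X (-2) by rw [h]) ≫
      (show V.X (-2) ⟶ (bW V C p).X (-2) from bf2 V C p) ≫
      eqToHom (show (bW V C p).X (-2) = (bW V C p).X i by rw [h])
  else 0

lemma bfF_0 : bfF V C p 0 = (show V.X 0 ⟶ (bW V C p).X 0 from 𝟙 _) := by
  unfold bfF; rw [dif_pos rfl]; simp; exact Category.comp_id _

lemma bfF_1 : bfF V C p (-1) = (show V.X (-1) ⟶ (bW V C p).X (-1) from biprod.inr) := by
  unfold bfF; rw [dif_neg (by omega), dif_pos rfl]; simp; exact Category.comp_id _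

lemma bfF_2 : bfF V C p (-2) = (show V.X (-2) ⟶ (bW V C p).X (-2) from bf2 V C p) := by
  unfold bfF; rw [dif_neg (by omega), dif_neg (by omega), dif_pos rfl]; simp; exact Category.comp_id _

lemma bfF_z (i : ℤ) (h0 : ¬ i = 0) (h1 : ¬ i = -1) (h2 : ¬ i = -2) : bfF V C p i = 0 := by
  unfold bfF; rw [dif_neg h0, dif_neg h1, dif_neg h2]

noncomputable def bf : V ⟶ bW V C p where
  f := bfF V C p
  comm' i j hij := by
    simp only [ComplexShape.up_Rel] at hij
    show bfF V C p i ≫ (bW V C p).d i j = V.d i j ≫ bfF V C p j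
    rcases lt_trichotomy i (-3) with hi | hi | hi
    · rw [bfF_z V C p i (by omega) (by omega) (by omega), zero_comp,
        bfF_z V C p j (by omega) (by omega) (by omega), comp_zero]
    · subst hi
      obtain rfl : j = -2 := by omega
      rw [bfF_z V C p (-3) (by omega) (by omega) (by omega), zero_comp, bfF_2]
      exact (show 0 = V.d (-3) (-2) ≫ bf2 V C p by
        rw [← cancel_mono (kernel.ι (bD V C p))]
        simp [bf2])
    · by_cases h2 : i = -2
      · subst h2
        obtain rfl : j = -1 := by omega
        rw [bfF_2, bfF_1, bW_d, tripD_21]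
        simp [bf2]
        exact kernel.lift_ι _ _ _
      · by_cases h1 : i = -1
        · subst h1
          obtain rfl : j = 0 := by omega
          rw [bfF_1, bfF_0, bW_d, tripD_10]
          simp [bD]
          exact (biprod.inr_desc _ _).trans (Category.comp_id _).symm
        · by_cases h0 : i = 0
          · subst h0
            obtain rfl : j = 1 := by omega
            rw [bfF_z V C p 1 (by omega) (by omega) (by omega), comp_zero, bW_d,
              tripD_zero _ _ _ _ _ 0 1 (by omega) (by omega)]
            exact comp_zero
          · rw [bfF_z V C p i h0 h1 h2, zero_comp,
              bfF_z V C p j (by omega) (by omega) (by omega), comp_zero]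

lemma bdesc_eq (hs : s ≫ V.d (-1) 0 = p) :
    biprod.desc s (𝟙 (V.X (-1))) ≫ V.d (-1) 0 = bD V C p := by
  apply biprod.hom_ext' <;> simp [bD, hs]

variable (hs : s ≫ V.d (-1) 0 = p)

noncomputable def blam : kernel (bD V C p) ⟶ kernel (V.d (-1) 0) :=
  kernel.lift _ (kernel.ι _ ≫ biprod.desc s (𝟙 _))
    (by rw [Category.assoc, bdesc_eq V C p s hs, kernel.condition])

lemma blam_ι : blam V C p s hs ≫ kernel.ι (V.d (-1) 0) = kernel.ι _ ≫ biprod.desc s (𝟙 _) :=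
  kernel.lift_ι _ _ _

variable (s1 : (kernel (V.d (-1) 0) : A) ⟶ V.X (-2))

noncomputable def bgF : ∀ i : ℤ, (bW V C p).X i ⟶ V.X i := fun i =>
  if h : i = 0 then
    eqToHom (show (bW V C p).X i = (bW V C p).X 0 by rw [h]) ≫
      (show (bW V C p).X 0 ⟶ V.X 0 from 𝟙 _) ≫ eqToHom (show V.X 0 = V.X i by rw [h])
  else if h : i = -1 then
    eqToHom (show (bW V C p).X i = (bW V C p).X (-1) by rw [h]) ≫
      (show (bW V C p).X (-1) ⟶ V.X (-1) from biprod.desc s (𝟙 _)) ≫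
      eqToHom (show V.X (-1) = V.X i by rw [h])
  else if h : i = -2 then
    eqToHom (show (bW V C p).X i = (bW V C p).X (-2) by rw [h]) ≫
      (show (bW V C p).X (-2) ⟶ V.X (-2) from blam V C p s hs ≫ s1) ≫
      eqToHom (show V.X (-2) = V.X i by rw [h])
  else 0

lemma bgF_0 : bgF V C p s hs s1 0 = (show (bW V C p).X 0 ⟶ V.X 0 from 𝟙 _) := by
  unfold bgF; rw [dif_pos rfl]; simp; exact Category.comp_id _

lemma bgF_1 : bgF V C p s hs s1 (-1) =
    (show (bW V C p).X (-1) ⟶ V.X (-1) from biprod.desc s (𝟙 _)) := by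
  unfold bgF; rw [dif_neg (by omega), dif_pos rfl]; simp; exact Category.comp_id _

lemma bgF_2 : bgF V C p s hs s1 (-2) =
    (show (bW V C p).X (-2) ⟶ V.X (-2) from blam V C p s hs ≫ s1) := by
  unfold bgF; rw [dif_neg (by omega), dif_neg (by omega), dif_pos rfl]; simp

lemma bgF_z (i : ℤ) (h0 : ¬ i = 0) (h1 : ¬ i = -1) (h2 : ¬ i = -2) :
    bgF V C p s hs s1 i = 0 := by
  unfold bgF; rw [dif_neg h0, dif_neg h1, dif_neg h2]

variable (hz1 : IsZero (V.X 1)) (hs1 : s1 ≫ V.d (-2) (-1) = kernel.ι (V.d (-1) 0))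

noncomputable def bg (hz1 : IsZero (V.X 1)) (hs1 : s1 ≫ V.d (-2) (-1) = kernel.ι (V.d (-1) 0)) :
    bW V C p ⟶ V where
  f := bgF V C p s hs s1
  comm' i j hij := by
    simp only [ComplexShape.up_Rel] at hij
    show bgF V C p s hs s1 i ≫ V.d i j = (bW V C p).d i j ≫ bgF V C p s hs s1 j
    rcases lt_trichotomy i (-3) with hi | hi | hi
    · rw [bgF_z V C p s hs s1 i (by omega) (by omega) (by omega), zero_comp,
        bgF_z V C p s hs s1 j (by omega) (by omega) (by omega), comp_zero]
    · subst hi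
      obtain rfl : j = -2 := by omega
      rw [bgF_z V C p s hs s1 (-3) (by omega) (by omega) (by omega), zero_comp, bW_d,
        tripD_zero _ _ _ _ _ (-3) (-2) (by omega) (by omega)]
      exact zero_comp.symm
    · by_cases h2 : i = -2
      · subst h2
        obtain rfl : j = -1 := by omega
        rw [bgF_2, bgF_1, bW_d, tripD_21]
        show (blam V C p s hs ≫ s1) ≫ V.d (-2) (-1) = _
        rw [Category.assoc, hs1, blam_ι]
        rfl
      · by_cases h1 : i = -1
        · subst h1
          obtain rfl : j = 0 := by omega
          rw [bgF_1, bgF_0, bW_d, tripD_10]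
          show biprod.desc s (𝟙 _) ≫ V.d (-1) 0 = bD V C p ≫ 𝟙 _
          rw [bdesc_eq V C p s hs, Category.comp_id]
        · by_cases h0 : i = 0
          · subst h0
            obtain rfl : j = 1 := by omega
            rw [bgF_z V C p s hs s1 1 (by omega) (by omega) (by omega), comp_zero, bgF_0]
            show (show (bW V C p).X 0 ⟶ V.X 0 from 𝟙 _) ≫ V.d 0 1 = 0
            apply hz1.eq_of_tgt
          · rw [bgF_z V C p s hs s1 i h0 h1 h2, zero_comp,
              bgF_z V C p s hs s1 j (by omega) (by omega) (by omega), comp_zero]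

end Build

lemma bf_f (V : CochainComplex A ℤ) (C : A) (p : C ⟶ V.X 0) :
    (bf V C p).f = bfF V C p := rfl

lemma bg_f (V : CochainComplex A ℤ) (C : A) (p : C ⟶ V.X 0) (s : C ⟶ V.X (-1))
    (hs : s ≫ V.d (-1) 0 = p) (s1 : (kernel (V.d (-1) 0) : A) ⟶ V.X (-2))
    (hz1 : IsZero (V.X 1)) (hs1 : s1 ≫ V.d (-2) (-1) = kernel.ι (V.d (-1) 0)) :
    (bg V C p s hs s1 hz1 hs1).f = bgF V C p s hs s1 := rfl

section HomotopyWV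
variable (V : CochainComplex A ℤ) (C : A) (p : C ⟶ V.X 0) (s : C ⟶ V.X (-1))

noncomputable def tW (T : (bW V C p).X (-1) ⟶ (bW V C p).X (-2)) :
    ∀ i j : ℤ, (bW V C p).X i ⟶ (bW V C p).X j := fun i j =>
  if h : i = -1 ∧ j = -2 then
    eqToHom (show (bW V C p).X i = (bW V C p).X (-1) by rw [h.1]) ≫ T ≫
      eqToHom (show (bW V C p).X (-2) = (bW V C p).X j by rw [h.2])
  else 0

lemma tW_12 (T) : tW V C p T (-1) (-2) = T := by
  unfold tW; rw [dif_pos ⟨rfl, rfl⟩]; simp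

lemma tW_zero (T) (i j : ℤ) (h : ¬ (i = -1 ∧ j = -2)) : tW V C p T i j = 0 := by
  unfold tW; rw [dif_neg h]

lemma homotopyWV (hs : s ≫ V.d (-1) 0 = p) (s1 : (kernel (V.d (-1) 0) : A) ⟶ V.X (-2))
    (hz1 : IsZero (V.X 1)) (hs1 : s1 ≫ V.d (-2) (-1) = kernel.ι (V.d (-1) 0)) :
    Nonempty (Homotopy (bg V C p s hs s1 hz1 hs1 ≫ bf V C p) (𝟙 (bW V C p))) := by
  have hTc : (biprod.desc s (𝟙 (V.X (-1))) ≫ biprod.inr - 𝟙 (C ⊞ V.X (-1))) ≫ bD V C p = 0 := by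
    rw [Preadditive.sub_comp, Category.assoc,
      show biprod.inr ≫ bD V C p = V.d (-1) 0 from biprod.inr_desc _ _,
      bdesc_eq V C p s hs]
    simp
  set T : (bW V C p).X (-1) ⟶ (bW V C p).X (-2) := kernel.lift _ _ hTc with hT
  have hTι : T ≫ kernel.ι (bD V C p) = biprod.desc s (𝟙 _) ≫ biprod.inr - 𝟙 _ :=
    kernel.lift_ι _ _ _
  refine ⟨⟨tW V C p T, fun i j hij => tW_zero V C p T i j (by simp only [ComplexShape.up_Rel] at hij; omega), fun i => ?_⟩⟩
  rcases lt_trichotomy i (-2) with hi | hi | hi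
  · exact (trip_isZero _ _ _ _ _ _ i (Or.inl hi)).eq_of_tgt _ _
  · subst hi
    rw [dNext_eq _ (show (ComplexShape.up ℤ).Rel (-2) (-1) by decide),
      prevD_eq _ (show (ComplexShape.up ℤ).Rel (-3) (-2) by decide),
      tW_12, tW_zero V C p T (-2) (-3) (by omega), zero_comp, add_zero,
      HomologicalComplex.comp_f, HomologicalComplex.id_f, bg_f, bf_f, bgF_2, bfF_2,
      bW_d, tripD_21]
    exact (show (blam V C p s hs ≫ s1) ≫ bf2 V C p =
        kernel.ι (bD V C p) ≫ kernel.lift (bD V C p) _ hTc + 𝟙 (kernel (bD V C p)) by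
      rw [← cancel_mono (kernel.ι (bD V C p))]
      rw [Preadditive.add_comp, Category.assoc, Category.assoc, Category.assoc, kernel.lift_ι,
        show bf2 V C p ≫ kernel.ι (bD V C p) = V.d (-2) (-1) ≫ biprod.inr from kernel.lift_ι _ _ _,
        ← Category.assoc s1, hs1, ← Category.assoc, blam_ι]
      simp only [Preadditive.comp_sub, Preadditive.add_comp, Category.id_comp, Category.assoc]
      rw [show kernel.ι (bD V C p) ≫ 𝟙 (C ⊞ V.X (-1)) = kernel.ι (bD V C p) from
        Category.comp_id _, sub_add_cancel])
  · rcases lt_trichotomy i 0 with hi' | hi' | hi'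
    · obtain rfl : i = -1 := by omega
      rw [dNext_eq _ (show (ComplexShape.up ℤ).Rel (-1) 0 by decide),
        prevD_eq _ (show (ComplexShape.up ℤ).Rel (-2) (-1) by decide),
        tW_12, tW_zero V C p T 0 (-1) (by omega), comp_zero, zero_add,
        HomologicalComplex.comp_f, HomologicalComplex.id_f, bg_f, bf_f, bgF_1, bfF_1,
        bW_d, tripD_21]
      erw [hTι]
      rw [show 𝟙 ((bW V C p).X (-1)) = 𝟙 (C ⊞ V.X (-1)) from rfl]
      exact (sub_add_cancel _ _).symm
    · subst hi'
      rw [dNext_eq _ (show (ComplexShape.up ℤ).Rel 0 1 by decide),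
        prevD_eq _ (show (ComplexShape.up ℤ).Rel (-1) 0 by decide),
        tW_zero V C p T 1 0 (by omega), comp_zero, tW_zero V C p T 0 (-1) (by omega), zero_comp,
        HomologicalComplex.comp_f, HomologicalComplex.id_f, bg_f, bf_f, bgF_0, bfF_0]
      simp
      exact Category.comp_id _
    · exact (trip_isZero _ _ _ _ _ _ i (Or.inr hi')).eq_of_tgt _ _

end HomotopyWV

section HomotopyVW
variable (V : CochainComplex A ℤ) (C : A) (p : C ⟶ V.X 0) (s : C ⟶ V.X (-1))

noncomputable def tV (h : ∀ i j : ℤ, KTX V i ⟶ V.X j) : ∀ i j : ℤ, V.X i ⟶ V.X j := fun i j =>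
  if hc : i ≤ -2 ∧ j = i - 1 then -(eqToHom ((KTX_eq V hc.1).symm) ≫ h i j) else 0

lemma tV_pos (h) {i j : ℤ} (hi : i ≤ -2) (hj : j = i - 1) :
    tV V h i j = -(eqToHom ((KTX_eq V hi).symm) ≫ h i j) := dif_pos ⟨hi, hj⟩

lemma tV_zero (h) {i j : ℤ} (hij : ¬ (i ≤ -2 ∧ j = i - 1)) : tV V h i j = 0 := dif_neg hij

lemma eqToHom_KTX_m2 :
    (eqToHom ((KTX_eq V (show (-2:ℤ) ≤ -2 by norm_num)).symm) : V.X (-2) ⟶ KTX V (-2)) =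
      𝟙 (V.X (-2)) := rfl

lemma homotopyVW (hs : s ≫ V.d (-1) 0 = p) (hpos : ∀ i : ℤ, 0 < i → IsZero (V.X i))
    (H : Homotopy (KJ V) 0)
    (hs1 : (show (kernel (V.d (-1) 0) : A) ⟶ V.X (-2) from H.hom (-1) (-2)) ≫ V.d (-2) (-1) =
      kernel.ι (V.d (-1) 0)) :
    Nonempty (Homotopy
      (bf V C p ≫ bg V C p s hs (show _ from H.hom (-1) (-2)) (hpos 1 one_pos) hs1) (𝟙 V)) := by
  have hfl : bf2 V C p ≫ blam V C p s hs = KTdbar V := by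
    rw [← cancel_mono (kernel.ι (V.d (-1) 0)), Category.assoc, blam_ι, KTdbar_ι,
      ← Category.assoc, show bf2 V C p ≫ kernel.ι (bD V C p) = V.d (-2) (-1) ≫ biprod.inr from
        kernel.lift_ι _ _ _, Category.assoc, biprod.inr_desc, Category.comp_id]
  refine ⟨⟨tV V H.hom, fun i j hij => tV_zero V H.hom (by simp only [ComplexShape.up_Rel] at hij; omega), fun i => ?_⟩⟩
  rcases lt_trichotomy i (-2) with hi | hi | hi
  · -- i ≤ -3
    have hc := H.comm i
    rw [dNext_eq _ (show (ComplexShape.up ℤ).Rel i (i+1) from rfl),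
      prevD_eq _ (show (ComplexShape.up ℤ).Rel (i-1) i by simp),
      show (KJ V).f i = KJf V i from rfl, show (KT V).d = KTD V from rfl,
      KTD_le V rfl (by omega), KJf_le V (by omega : i ≤ -2),
      HomologicalComplex.zero_f, add_zero] at hc
    dsimp only [KT] at hc
    have key := congrArg (fun z => eqToHom ((KTX_eq V (show i ≤ -2 by omega)).symm) ≫ z) hc
    erw [Preadditive.comp_add] at key
    simp only [Preadditive.comp_add, Category.assoc, eqToHom_trans_assoc, eqToHom_refl,
      Category.id_comp, eqToHom_trans] at key
    rw [dNext_eq _ (show (ComplexShape.up ℤ).Rel i (i+1) from rfl),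
      prevD_eq _ (show (ComplexShape.up ℤ).Rel (i-1) i by simp),
      tV_pos V H.hom (show i+1 ≤ -2 by omega) (by omega),
      tV_pos V H.hom (show i ≤ -2 by omega) (by omega),
      HomologicalComplex.comp_f, HomologicalComplex.id_f, bf_f, bg_f,
      bfF_z V C p i (by omega) (by omega) (by omega), zero_comp]
    dsimp only [KT]
    rw [key]
    simp only [Preadditive.comp_neg, Preadditive.neg_comp, Category.assoc]
    abel
  · -- i = -2
    subst hi
    have hc := H.comm (-2)
    rw [dNext_eq _ (show (ComplexShape.up ℤ).Rel (-2) (-1) by decide),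
      prevD_eq _ (show (ComplexShape.up ℤ).Rel (-3) (-2) by decide),
      show (KJ V).f (-2) = KJf V (-2) from rfl, KJf_m2,
      show (KT V).d = KTD V from rfl, KTD_21,
      HomologicalComplex.zero_f, add_zero] at hc
    rw [dNext_eq _ (show (ComplexShape.up ℤ).Rel (-2) (-1) by decide),
      prevD_eq _ (show (ComplexShape.up ℤ).Rel (-3) (-2) by decide),
      tV_zero V H.hom (by omega),
      tV_pos V H.hom (show (-2:ℤ) ≤ -2 by norm_num) (by norm_num),
      HomologicalComplex.comp_f, HomologicalComplex.id_f, bf_f, bg_f, bfF_2, bgF_2,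
      eqToHom_KTX_m2]
    erw [Category.id_comp]
    rw [comp_zero, zero_add]
    erw [← Category.assoc, hfl, hc]
    have aux : ∀ {P Q : A} (a : P ⟶ P) (b : P ⟶ Q) (d : Q ⟶ P), a = (-b) ≫ d + (a + b ≫ d) := by
      intros; rw [Preadditive.neg_comp]; abel
    exact aux _ _ _
  · rcases lt_trichotomy i 0 with hi' | hi' | hi'
    · obtain rfl : i = -1 := by omega
      rw [dNext_eq _ (show (ComplexShape.up ℤ).Rel (-1) 0 by decide),
        prevD_eq _ (show (ComplexShape.up ℤ).Rel (-2) (-1) by decide),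
        tV_zero V H.hom (by omega), tV_zero V H.hom (by omega),
        HomologicalComplex.comp_f, HomologicalComplex.id_f, bf_f, bg_f, bfF_1, bgF_1]
      simp
      exact biprod.inr_desc _ _
    · subst hi'
      rw [dNext_eq _ (show (ComplexShape.up ℤ).Rel 0 1 by decide),
        prevD_eq _ (show (ComplexShape.up ℤ).Rel (-1) 0 by decide),
        tV_zero V H.hom (by omega), tV_zero V H.hom (by omega),
        HomologicalComplex.comp_f, HomologicalComplex.id_f, bf_f, bg_f, bfF_0, bgF_0]
      simp
      exact Category.comp_id _
    · exact (hpos i hi').eq_of_tgt _ _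

end HomotopyVW

section FromSingle
variable (M : A) (K : CochainComplex A ℤ) (hK1 : IsZero (K.X 1)) (φ : M ⟶ K.X 0)

noncomputable def fromSingleF :
    ∀ i : ℤ, ((HomologicalComplex.single A (ComplexShape.up ℤ) 0).obj M).X i ⟶ K.X i := fun i =>
  if h : i = 0 then
    eqToHom (show ((HomologicalComplex.single A (ComplexShape.up ℤ) 0).obj M).X i =
        ((HomologicalComplex.single A (ComplexShape.up ℤ) 0).obj M).X 0 by rw [h]) ≫
      (HomologicalComplex.singleObjXSelf (ComplexShape.up ℤ) 0 M).hom ≫ φ ≫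
      eqToHom (show K.X 0 = K.X i by rw [h])
  else 0

lemma fromSingleF_0 : fromSingleF M K φ 0 =
    (HomologicalComplex.singleObjXSelf (ComplexShape.up ℤ) 0 M).hom ≫ φ := by
  unfold fromSingleF
  rw [dif_pos rfl]
  simp

lemma fromSingleF_z {i : ℤ} (hi : ¬ i = 0) : fromSingleF M K φ i = 0 := by
  unfold fromSingleF
  rw [dif_neg hi]

noncomputable def fromSingle :
    (HomologicalComplex.single A (ComplexShape.up ℤ) 0).obj M ⟶ K where
  f := fromSingleF M K φ
  comm' i j hij := by
    simp only [ComplexShape.up_Rel] at hij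
    by_cases h : i = 0
    · subst h
      obtain rfl : j = 1 := by omega
      exact hK1.eq_of_tgt _ _
    · rw [fromSingleF_z M K φ h, zero_comp, HomologicalComplex.single_obj_d, zero_comp]

lemma fromSingle_f0 : (fromSingle M K hK1 φ).f 0 =
    (HomologicalComplex.singleObjXSelf (ComplexShape.up ℤ) 0 M).hom ≫ φ :=
  fromSingleF_0 M K φ

end FromSingle

lemma KJ_nullhomotopic (X : HomotopyCategory A (ComplexShape.up ℤ)) (hge : InTgeA X) :
    Nonempty (Homotopy (KJ X.as) 0) := by
  set Qf := HomotopyCategory.quotient A (ComplexShape.up ℤ) with hQf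
  set B := (CategoryTheory.shiftFunctor (CochainComplex A ℤ) (-1 : ℤ)).obj (KT X.as) with hB
  have hY : InTleA (Qf.obj B) := by
    constructor
    · exact ⟨0, fun i hi => KTX_isZero X.as (by omega : (-1:ℤ) < i + -1)⟩
    · exact fun i hi => KTX_isZero X.as (by omega : (-1:ℤ) < i + -1)
  have e1 := (Qf.commShiftIso (1 : ℤ)).app B
  have e2 := (shiftFunctorCompIsoId (CochainComplex A ℤ) (-1) 1 (by norm_num)).app (KT X.as)
  have h0 := hge.2 (Qf.obj B) hY (e1.inv ≫ Qf.map (e2.hom ≫ KJ X.as))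
  rw [Functor.map_comp] at h0
  erw [CategoryTheory.Preadditive.IsIso.comp_left_eq_zero, CategoryTheory.Preadditive.IsIso.comp_left_eq_zero] at h0
  exact ⟨HomotopyCategory.homotopyOfEq _ _ (by rw [h0, Functor.map_zero])⟩

lemma quot_hom_zero (𝒞 : Set A) (W : CochainComplex A ℤ)
    (hz : ∀ i : ℤ, (i < -2 ∨ 0 < i) → IsZero (W.X i))
    (C Y : A) (e : W.X (-1) ≅ C ⊞ Y)
    (hcov : IsCCover 𝒞 (biprod.inl ≫ e.inv ≫ W.d (-1) 0))
    (hK : Nonempty (IsLimit (KernelFork.ofι (W.d (-2) (-1)) (W.d_comp_d (-2) (-1) 0))))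
    (U : CochainComplex A ℤ) (hU : U.X 0 ∈ 𝒞)
    (φ : (HomotopyCategory.quotient A (ComplexShape.up ℤ)).obj U ⟶
      (HomotopyCategory.quotient A (ComplexShape.up ℤ)).obj W) : φ = 0 := by
  obtain ⟨u, rfl⟩ := (HomotopyCategory.quotient A (ComplexShape.up ℤ)).map_surjective φ
  obtain ⟨h⟩ := homotopy_to_cover_complex 𝒞 W hz C Y e hcov hK.some U hU u
  rw [HomotopyCategory.eq_of_homotopy _ _ h, Functor.map_zero]


/-!
STATEMENT 6: Assume `C` is `A`-approximating.  An object `V` of `H_A` satisfies `π_C V ≅ 0`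
(i.e. any `C`-approximation `Vc` of `V` is zero) if and only if `V` is isomorphic in `H_A`
(equivalently, in `K^-(A)`, since `H_A` is a full subcategory) to a complex of the form
`[X → C ⊞ Y → Z]` concentrated in degrees `-2, -1, 0`, in which the component `C ⟶ Z` of
the differential is a `C`-cover and `X ⟶ C ⊞ Y` is a kernel of `C ⊞ Y ⟶ Z`.
-/
theorem statement6 {A : Type u} [Category.{v} A] [Abelian A]
    (𝒞 : Set A) (h𝒞 : IsAddKaroubi 𝒞) (happrox : CApproximating 𝒞) :
    ∀ V, InHA V → ∀ (Vc : HomotopyCategory A (ComplexShape.up ℤ)) (f : Vc ⟶ V),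
      IsCApprox 𝒞 f →
      (IsZero Vc ↔
        ∃ W : CochainComplex A ℤ,
          -- `W` is concentrated in degrees `-2, -1, 0`:
          (∀ i : ℤ, (i < -2 ∨ 0 < i) → IsZero (W.X i)) ∧
          -- the middle term decomposes as `C ⊞ Y` with `C ∈ 𝒞` and the component
          -- `C ⟶ W.X 0` of the differential a `C`-cover:
          (∃ (C Y : A) (_ : C ∈ 𝒞) (e : W.X (-1) ≅ C ⊞ Y),
            IsCCover 𝒞 (biprod.inl ≫ e.inv ≫ W.d (-1) 0)) ∧
          -- `W.X (-2)` is the kernel of the differential `W.X (-1) ⟶ W.X 0`: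
          Nonempty (IsLimit (KernelFork.ofι (W.d (-2) (-1)) (W.d_comp_d (-2) (-1) 0))) ∧
          -- and `V ≅ W` in `H_A`:
          Nonempty ((HomotopyCategory.quotient A (ComplexShape.up ℤ)).obj W ≅ V)) := by
  intro V hV Vc f hf
  constructor
  · -- forward direction
    intro hzero
    have hvan : ∀ (M : A), M ∈ 𝒞 → ∀ θ : PObj M ⟶ V, θ = 0 := by
      intro M hM θ
      obtain ⟨g, hg⟩ := (hf.2.2 _ (inTC_single 𝒞 h𝒞 M hM)).2 θ
      rw [← hg, hzero.eq_of_tgt g 0]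
      simp
      rfl
    set Vas := V.as with hVas
    have hpos : ∀ i : ℤ, 0 < i → IsZero (Vas.X i) := fun i hi => hV.1.2 i hi
    obtain ⟨C, p, hcov⟩ := exists_cCover 𝒞 h𝒞 happrox (Vas.X 0)
    have hθ : (HomotopyCategory.quotient A (ComplexShape.up ℤ)).map
        (fromSingle C Vas (hpos 1 one_pos) p) = 0 := hvan C hcov.1 _
    have H0 : Homotopy (fromSingle C Vas (hpos 1 one_pos) p) 0 :=
      HomotopyCategory.homotopyOfEq _ _ (by rw [hθ, Functor.map_zero])
    have h00 := H0.comm 0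
    rw [dNext_eq _ (show (ComplexShape.up ℤ).Rel 0 1 by decide),
      prevD_eq _ (show (ComplexShape.up ℤ).Rel (-1) 0 by decide),
      HomologicalComplex.single_obj_d, zero_comp, zero_add, HomologicalComplex.zero_f, add_zero,
      show (fromSingle C Vas (hpos 1 one_pos) p).f 0 = fromSingleF C Vas p 0 from rfl,
      fromSingleF_0] at h00
    set s : C ⟶ Vas.X (-1) :=
      (HomologicalComplex.singleObjXSelf (ComplexShape.up ℤ) 0 C).inv ≫ H0.hom 0 (-1) with hsdef
    have hs : s ≫ Vas.d (-1) 0 = p := by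
      rw [hsdef, Category.assoc, ← h00, Iso.inv_hom_id_assoc]
    obtain ⟨H⟩ := KJ_nullhomotopic V hV.2
    have hc1 := H.comm (-1)
    rw [dNext_eq _ (show (ComplexShape.up ℤ).Rel (-1) 0 by decide),
      prevD_eq _ (show (ComplexShape.up ℤ).Rel (-2) (-1) by decide),
      show (KJ Vas).f (-1) = KJf Vas (-1) from rfl, KJf_m1,
      show (KT Vas).d = KTD Vas from rfl, KTD_zero Vas (-1) 0 (by omega) (by omega)] at hc1
    erw [zero_comp] at hc1
    rw [zero_add, HomologicalComplex.zero_f, add_zero] at hc1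
    have id1 : (show (kernel (Vas.d (-1) 0) : A) ⟶ Vas.X (-2) from H.hom (-1) (-2)) ≫
        Vas.d (-2) (-1) = kernel.ι (Vas.d (-1) 0) := hc1.symm
    obtain ⟨Ht⟩ := homotopyVW Vas C p s hs hpos H id1
    obtain ⟨Hw⟩ := homotopyWV Vas C p s hs
      (show (kernel (Vas.d (-1) 0) : A) ⟶ Vas.X (-2) from H.hom (-1) (-2)) (hpos 1 one_pos) id1
    have hcov' : biprod.inl ≫
        (show (bW Vas C p).X (-1) ≅ C ⊞ Vas.X (-1) from Iso.refl _).inv ≫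
        (bW Vas C p).d (-1) 0 = p := by
      rw [bW_d, tripD_10, Iso.refl_inv]
      exact (biprod.inl ≫= Category.id_comp (bD Vas C p)).trans (biprod.inl_desc _ _)
    refine ⟨bW Vas C p, fun i hi => trip_isZero _ _ _ _ _ _ i hi,
      ⟨C, Vas.X (-1), hcov.1, show (bW Vas C p).X (-1) ≅ C ⊞ Vas.X (-1) from Iso.refl _, ?_⟩,
      ⟨?_⟩,
      ⟨HomotopyCategory.isoOfHomotopyEquiv
        ⟨bg Vas C p s hs _ (hpos 1 one_pos) id1, bf Vas C p, Hw, Ht⟩⟩⟩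
    · rw [hcov']
      exact hcov
    · refine KernelFork.IsLimit.ofι _ _
        (fun {W'} k hk => kernel.lift (bD Vas C p) k ?_) (fun {W'} k hk => ?_)
        (fun {W'} k hk m hm => ?_)
      · rwa [show bD Vas C p = (bW Vas C p).d (-1) 0 from by rw [bW_d, tripD_10]]
      · rw [show (bW Vas C p).d (-2) (-1) = kernel.ι (bD Vas C p) from by rw [bW_d, tripD_21]]
        exact kernel.lift_ι _ _ _
      · erw [← cancel_mono (kernel.ι (bD Vas C p))]
        refine Eq.trans ?_ (kernel.lift_ι _ _ _).symm
        rwa [show (bW Vas C p).d (-2) (-1) = kernel.ι (bD Vas C p) from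
          by rw [bW_d, tripD_21]] at hm
  · -- backward direction
    rintro ⟨W, hzW, ⟨C, Y, hC, e, hcovW⟩, hKlim, ⟨ψ⟩⟩
    have h1 : f ≫ ψ.inv = 0 :=
      quot_hom_zero 𝒞 W hzW C Y e hcovW hKlim Vc.as (hf.1.2 0) (f ≫ ψ.inv)
    have hf0 : f = 0 := by
      have h2 := congrArg (fun z => z ≫ ψ.hom) h1
      simpa using h2
    have hid : 𝟙 Vc = 0 :=
      (hf.2.2 Vc hf.1).1 (show 𝟙 Vc ≫ f = 0 ≫ f by rw [hf0]; simp)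
    exact (Limits.IsZero.iff_id_eq_zero Vc).mpr hid
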